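/- Let l divide n, 1 ≤ p,q ≤ n/l, and 1 ≤ r ≤ l−1. Then in U(Q(n))/I_χ: π(e_{l(p−1)+m, l(q−1)+1}^{(r)}) = δ_{p,q} if m = r+1, π(e_{l(p−1)+m, l(q−1)+1}^{(r)}) = 0 if r+2 ≤ m ≤ l, and π(f_{l(p−1)+m, l(q−1)+1}^{(r)}) = 0 if r+1 ≤ m ≤ l. -/
import Mathlib


noncomputable section
open scoped Classical

/-! # The universal enveloping superalgebra `U(Q(n))` of the queer Lie superalgebra

`U(Q(n))` is presented by even generators `e i j` and odd generators `f i j`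
(`1 ≤ i,j ≤ n`) subject to the relations
`[e i j, e k l] = δ_{jk} e i l - δ_{li} e k j`,
`[e i j, f k l] = δ_{jk} f i l - δ_{li} f k j`,
`f i j * f k l + f k l * f i j = δ_{jk} e i l + δ_{li} e k j`. -/

/-- Generators of `U(Q(n))`: `E i j` (even) and `F i j` (odd). -/
inductive QGen (n : ℕ) : Type
  | E : Fin n → Fin n → QGen n
  | F : Fin n → Fin n → QGen n

/-- Kronecker delta. -/
def kd {n : ℕ} (i j : Fin n) : ℂ := if i = j then 1 else 0

/-- The defining relations of `U(Q(n))`. -/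
inductive QRel (n : ℕ) : FreeAlgebra ℂ (QGen n) → FreeAlgebra ℂ (QGen n) → Prop
  | ee (i j k l : Fin n) : QRel n
      (FreeAlgebra.ι ℂ (QGen.E i j) * FreeAlgebra.ι ℂ (QGen.E k l) -
        FreeAlgebra.ι ℂ (QGen.E k l) * FreeAlgebra.ι ℂ (QGen.E i j))
      (kd j k • FreeAlgebra.ι ℂ (QGen.E i l) - kd l i • FreeAlgebra.ι ℂ (QGen.E k j))
  | ef (i j k l : Fin n) : QRel n
      (FreeAlgebra.ι ℂ (QGen.E i j) * FreeAlgebra.ι ℂ (QGen.F k l) -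
        FreeAlgebra.ι ℂ (QGen.F k l) * FreeAlgebra.ι ℂ (QGen.E i j))
      (kd j k • FreeAlgebra.ι ℂ (QGen.F i l) - kd l i • FreeAlgebra.ι ℂ (QGen.F k j))
  | ff (i j k l : Fin n) : QRel n
      (FreeAlgebra.ι ℂ (QGen.F i j) * FreeAlgebra.ι ℂ (QGen.F k l) +
        FreeAlgebra.ι ℂ (QGen.F k l) * FreeAlgebra.ι ℂ (QGen.F i j))
      (kd j k • FreeAlgebra.ι ℂ (QGen.E i l) + kd l i • FreeAlgebra.ι ℂ (QGen.E k j))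

/-- The universal enveloping superalgebra `U(Q(n))`. -/
abbrev UQ (n : ℕ) := RingQuot (QRel n)

/-- The generator `e i j` of `U(Q(n))`. -/
def Ue {n : ℕ} (i j : Fin n) : UQ n :=
  RingQuot.mkAlgHom ℂ (QRel n) (FreeAlgebra.ι ℂ (QGen.E i j))

/-- The generator `f i j` of `U(Q(n))`. -/
def Uf {n : ℕ} (i j : Fin n) : UQ n :=
  RingQuot.mkAlgHom ℂ (QRel n) (FreeAlgebra.ι ℂ (QGen.F i j))

/-- Sergeev's elements `e_{ij}^{(m)}` and `f_{ij}^{(m)}` of `U(Q(n))`, defined recursively by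
`e^{(0)} = δ`, `f^{(0)} = 0`,
`e_{ij}^{(m)} = Σ_k e_{ik} e_{kj}^{(m-1)} + (-1)^{m+1} Σ_k f_{ik} f_{kj}^{(m-1)}`,
`f_{ij}^{(m)} = Σ_k e_{ik} f_{kj}^{(m-1)} + (-1)^{m+1} Σ_k f_{ik} e_{kj}^{(m-1)}`. -/
def efU (n : ℕ) : ℕ → (Fin n → Fin n → UQ n) × (Fin n → Fin n → UQ n)
  | 0 => (fun i j => algebraMap ℂ (UQ n) (kd i j), fun _ _ => 0)
  | m + 1 =>
      (fun i j => (∑ k, Ue i k * (efU n m).1 k j) +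
        (-1 : ℂ) ^ m • ∑ k, Uf i k * (efU n m).2 k j,
       fun i j => (∑ k, Ue i k * (efU n m).2 k j) +
        (-1 : ℂ) ^ m • ∑ k, Uf i k * (efU n m).1 k j)

/-- `e_{ij}^{(m)}`. -/
def eU {n : ℕ} (m : ℕ) (i j : Fin n) : UQ n := (efU n m).1 i j
/-- `f_{ij}^{(m)}`. -/
def fU {n : ℕ} (m : ℕ) (i j : Fin n) : UQ n := (efU n m).2 i j

/-- For `l ∣ n`, the index `l(p-1)+i` of `{1,…,n}` (0-based: block `p`, position `i`). -/
def bidx {n l : ℕ} (h : l ∣ n) (p : Fin (n / l)) (i : Fin l) : Fin n :=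
  ⟨l * p.val + i.val, by
    have h1 : i.val < l := i.isLt
    have h2 : p.val + 1 ≤ n / l := p.isLt
    have h3 : l * (p.val + 1) ≤ l * (n / l) := Nat.mul_le_mul_left l h2
    have h4 : n / l * l ≤ n := Nat.div_mul_le_self n l
    have h5 : l * (p.val + 1) = l * p.val + l := Nat.mul_succ l p.val
    have h6 : l * (n / l) = n / l * l := Nat.mul_comm l (n / l)
    omega⟩
set_option linter.unusedVariables false

/-! # The character `χ`, the left ideal `I_χ` and the finite W-algebra data

Here `l ∣ n` and `χ` corresponds to the even nilpotent element of `Q(n)` all of whose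
Jordan blocks have size `l`.  The subalgebra `m = ⊕_{j<0} g_j` is spanned by the
elements `e_{l(p-1)+i+k, l(q-1)+i}` and `f_{l(p-1)+i+k, l(q-1)+i}` (`k ≥ 1`), and
`χ(e_{l(p-1)+i+1, l(q-1)+i}) = δ_{pq}` and `χ = 0` on the other basis elements. -/

/-- The set of elements `a - χ(a)` for `a` ranging over the standard basis of `m`;
(rows/columns written 0-based: `a` is the position of the row inside its block `p`,
`b` the position of the column inside its block `q`, with `b < a`). -/
def mSet (n l : ℕ) (h : l ∣ n) : Set (UQ n) :=
  { x : UQ n | ∃ (p q : Fin (n / l)) (a b : Fin l), b.val < a.val ∧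
      (x = Ue (bidx h p a) (bidx h q b) -
            algebraMap ℂ (UQ n) (if a.val = b.val + 1 ∧ p = q then 1 else 0) ∨
       x = Uf (bidx h p a) (bidx h q b)) }

/-- The left ideal `I_χ` of `U(Q(n))` generated by the `a - χ(a)`, `a ∈ m`. -/
def Ichi (n l : ℕ) (h : l ∣ n) : Submodule (UQ n) (UQ n) :=
  Submodule.span (UQ n) (mSet n l h)

/-- The quotient `U(Q(n))/I_χ` (as a `ℂ`-vector space). -/
abbrev Wq (n l : ℕ) (h : l ∣ n) := UQ n ⧸ (Ichi n l h).restrictScalars ℂ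

/-- The quotient map `π : U(Q(n)) → U(Q(n))/I_χ`. -/
def piq (n l : ℕ) (h : l ∣ n) : UQ n →ₗ[ℂ] Wq n l h :=
  ((Ichi n l h).restrictScalars ℂ).mkQ

/-- `y` super-commutes with `m` into `I_χ`:  `[a, y] ∈ I_χ` for every `a` in the standard
basis of `m`.  Here the super-commutator of the odd element `f` with (the possibly
non-homogeneous) `y` is `f * y - σ(y) * f`, where `σ` is the parity involution of
`U(Q(n))` (the algebra automorphism fixing the `e`'s and negating the `f`'s). -/
def Wcond {n l : ℕ} (h : l ∣ n) (σ : UQ n →ₐ[ℂ] UQ n) (y : UQ n) : Prop :=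
  ∀ (p q : Fin (n / l)) (a b : Fin l), b.val < a.val →
    (Ue (bidx h p a) (bidx h q b) * y - y * Ue (bidx h p a) (bidx h q b) ∈ Ichi n l h) ∧
    (Uf (bidx h p a) (bidx h q b) * y - σ y * Uf (bidx h p a) (bidx h q b) ∈ Ichi n l h)

/-- The finite W-algebra `W_χ = {π(y) | [a, y] ∈ I_χ for all a ∈ m}`, as a subset of
`U(Q(n))/I_χ`.  (Its product is `π(y₁)·π(y₂) = π(y₁y₂)`.) -/
def WchiSet (n l : ℕ) (h : l ∣ n) (σ : UQ n →ₐ[ℂ] UQ n) : Set (Wq n l h) :=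
  { w : Wq n l h | ∃ y : UQ n, Wcond h σ y ∧ piq n l h y = w }

/-- The standard basis elements of the parabolic subalgebra `p = ⊕_{j≥0} g_j`. -/
def pSet (n l : ℕ) (h : l ∣ n) : Set (UQ n) :=
  { x : UQ n | ∃ (p q : Fin (n / l)) (a b : Fin l), a.val ≤ b.val ∧
      (x = Ue (bidx h p a) (bidx h q b) ∨ x = Uf (bidx h p a) (bidx h q b)) }

/-- The standard basis elements of the nilradical `n = ⊕_{j>0} g_j` of `p`. -/
def nSet (n l : ℕ) (h : l ∣ n) : Set (UQ n) :=
  { x : UQ n | ∃ (p q : Fin (n / l)) (a b : Fin l), a.val < b.val ∧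
      (x = Ue (bidx h p a) (bidx h q b) ∨ x = Uf (bidx h p a) (bidx h q b)) }

/-- The kernel of the Harish-Chandra projection `ϑ : U(p) → U(g₀)`, realized inside
`U(Q(n))`: the `ℂ`-span of `U(p)·n`.  (By the PBW theorem, `U(g) = U(p) ⊕ I_χ` and
`U(p) = U(g₀) ⊕ U(p)n`, so for `y ∈ U(g)`, `ϑ(pr(y)) = t` iff
`y - t ∈ I_χ + U(p)n`.) -/
def Lspan (n l : ℕ) (h : l ∣ n) : Submodule ℂ (UQ n) :=
  Submodule.span ℂ
    { x : UQ n | ∃ u ∈ Algebra.adjoin ℂ (pSet n l h), ∃ g ∈ nSet n l h, x = u * g }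

/-- A descriptor of a generator of `U(p)`:  `(b, p, q, a, c)` is
`e_{l(p-1)+(a+1), l(q-1)+(c+1)}` if `b = false` and `f_{…}` if `b = true`
(required: `a ≤ c`). -/
def pgElem {n l : ℕ} (h : l ∣ n) :
    Bool × Fin (n / l) × Fin (n / l) × Fin l × Fin l → UQ n
  | (b, p, q, a, c) => (if b then Uf else Ue) (bidx h p a) (bidx h q c)

/-- Kazhdan degree `2k+2` of a `p`-generator of block offset `k = c - a`. -/
def pgDeg {l m : ℕ} (d : Bool × Fin m × Fin m × Fin l × Fin l) : ℕ :=
  2 * (d.2.2.2.2.val - d.2.2.2.1.val) + 2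

/-- Weight `2k` of a `p`-generator of block offset `k = c - a`. -/
def pgWt {l m : ℕ} (d : Bool × Fin m × Fin m × Fin l × Fin l) : ℕ :=
  2 * (d.2.2.2.2.val - d.2.2.2.1.val)

/-- Monomials in the generators of `U(p)` which are "lower" than bidegree
(Kazhdan degree `D`, weight `W`): either of Kazhdan degree `< D`, or of Kazhdan
degree `≤ D` and weight `< W`. -/
def LowSet (n l : ℕ) (h : l ∣ n) (D W : ℕ) : Set (UQ n) :=
  { x : UQ n | ∃ L : List (Bool × Fin (n / l) × Fin (n / l) × Fin l × Fin l),
      (∀ d ∈ L, d.2.2.2.1.val ≤ d.2.2.2.2.val) ∧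
      x = (L.map (pgElem h)).prod ∧
      ((L.map pgDeg).sum < D ∨ ((L.map pgDeg).sum ≤ D ∧ (L.map pgWt).sum < W)) }

/-- The span of the "lower" monomials. -/
def LowSpan (n l : ℕ) (h : l ∣ n) (D W : ℕ) : Submodule ℂ (UQ n) :=
  Submodule.span ℂ (LowSet n l h D W)

/-! # The super tensor power `U(Q(m))^{⊗l}`

Modeled as the superalgebra with generators `x^i_{pq} = 1^{⊗(l-i)} ⊗ e_{pq} ⊗ 1^{⊗(i-1)}`
(even) and `ξ^i_{pq} = 1^{⊗(l-i)} ⊗ f_{pq} ⊗ 1^{⊗(i-1)}` (odd), subject to the `U(Q(m))`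
relations in each tensor slot and to (super-)commutation between different slots. -/

/-- Generators of `U(Q(m))^{⊗l}`: `X i p q` is `x^i_{pq}` and `Xi i p q` is `ξ^i_{pq}`
(`i : Fin l` is the 0-based tensor slot, counted from the right). -/
inductive TGen (m l : ℕ) : Type
  | X : Fin l → Fin m → Fin m → TGen m l
  | Xi : Fin l → Fin m → Fin m → TGen m l

/-- Kronecker delta on slots. -/
def kdl {l : ℕ} (i j : Fin l) : ℂ := if i = j then 1 else 0

/-- The defining relations of `U(Q(m))^{⊗l}`. -/
inductive TRel (m l : ℕ) : FreeAlgebra ℂ (TGen m l) → FreeAlgebra ℂ (TGen m l) → Prop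
  | xx (i i' : Fin l) (p q r s : Fin m) : TRel m l
      (FreeAlgebra.ι ℂ (TGen.X i p q) * FreeAlgebra.ι ℂ (TGen.X i' r s) -
        FreeAlgebra.ι ℂ (TGen.X i' r s) * FreeAlgebra.ι ℂ (TGen.X i p q))
      ((kdl i i' * kd q r) • FreeAlgebra.ι ℂ (TGen.X i p s) -
        (kdl i i' * kd s p) • FreeAlgebra.ι ℂ (TGen.X i' r q))
  | xxi (i i' : Fin l) (p q r s : Fin m) : TRel m l
      (FreeAlgebra.ι ℂ (TGen.X i p q) * FreeAlgebra.ι ℂ (TGen.Xi i' r s) -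
        FreeAlgebra.ι ℂ (TGen.Xi i' r s) * FreeAlgebra.ι ℂ (TGen.X i p q))
      ((kdl i i' * kd q r) • FreeAlgebra.ι ℂ (TGen.Xi i p s) -
        (kdl i i' * kd s p) • FreeAlgebra.ι ℂ (TGen.Xi i' r q))
  | xixi (i i' : Fin l) (p q r s : Fin m) : TRel m l
      (FreeAlgebra.ι ℂ (TGen.Xi i p q) * FreeAlgebra.ι ℂ (TGen.Xi i' r s) +
        FreeAlgebra.ι ℂ (TGen.Xi i' r s) * FreeAlgebra.ι ℂ (TGen.Xi i p q))
      ((kdl i i' * kd q r) • FreeAlgebra.ι ℂ (TGen.X i p s) +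
        (kdl i i' * kd s p) • FreeAlgebra.ι ℂ (TGen.X i' r q))

/-- The superalgebra `U(Q(m))^{⊗l}`. -/
abbrev TQ (m l : ℕ) := RingQuot (TRel m l)

/-- `x^i_{pq} := 1^{⊗(l-i)} ⊗ e_{pq} ⊗ 1^{⊗(i-1)} ∈ U(Q(m))^{⊗l}`. -/
def xT {m l : ℕ} (i : Fin l) (p q : Fin m) : TQ m l :=
  RingQuot.mkAlgHom ℂ (TRel m l) (FreeAlgebra.ι ℂ (TGen.X i p q))

/-- `ξ^i_{pq} := 1^{⊗(l-i)} ⊗ f_{pq} ⊗ 1^{⊗(i-1)} ∈ U(Q(m))^{⊗l}`. -/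
def xiT {m l : ℕ} (i : Fin l) (p q : Fin m) : TQ m l :=
  RingQuot.mkAlgHom ℂ (TRel m l) (FreeAlgebra.ι ℂ (TGen.Xi i p q))

/-! # The super-Yangian `Y(Q(n))` -/

/-- The index set `{±1, …, ±n}`:  `(false, a)` is the positive index `a` (even),
`(true, a)` is the negative index `-a` (odd). -/
abbrev QIdx (n : ℕ) := Bool × Fin n

/-- Negation `i ↦ -i` on indices. -/
def qneg {n : ℕ} (i : QIdx n) : QIdx n := (!i.1, i.2)

/-- The parity `p(i)`: `0` for positive `i`, `1` for negative `i`. -/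
def qpar {n : ℕ} (i : QIdx n) : ℕ := if i.1 then 1 else 0

/-- Kronecker delta on `{±1, …, ±n}`. -/
def kdq {n : ℕ} (i j : QIdx n) : ℂ := if i = j then 1 else 0

/-- Generators of `Y(Q(n))`: `T m i j` encodes `T^{(m+1)}_{i,j}`. -/
inductive YGen (n : ℕ) : Type
  | T : ℕ → QIdx n → QIdx n → YGen n

/-- `T^{(m)}_{i,j}` in the free algebra, with `T^{(0)}_{i,j} = δ_{ij}`. -/
def Tf {n : ℕ} : ℕ → QIdx n → QIdx n → FreeAlgebra ℂ (YGen n)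
  | 0, i, j => algebraMap ℂ _ (kdq i j)
  | m + 1, i, j => FreeAlgebra.ι ℂ (YGen.T m i j)

/-- The super-commutator `[T^{(a)}_{i,j}, T^{(b)}_{k,l}]` in the free algebra. -/
def ybr {n : ℕ} (a : ℕ) (i j : QIdx n) (b : ℕ) (k l : QIdx n) :
    FreeAlgebra ℂ (YGen n) :=
  Tf a i j * Tf b k l -
    ((-1 : ℂ) ^ ((qpar i + qpar j) * (qpar k + qpar l))) • (Tf b k l * Tf a i j)

/-- The defining relations of the super-Yangian `Y(Q(n))`: for `M, R ≥ 1`,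
`(-1)^{p(i)p(k)+p(i)p(l)+p(k)p(l)} ([T^{(M+1)}_{ij}, T^{(R-1)}_{kl}] - [T^{(M-1)}_{ij}, T^{(R+1)}_{kl}])
 = T^{(M)}_{kj}T^{(R-1)}_{il} + T^{(M-1)}_{kj}T^{(R)}_{il} - T^{(R-1)}_{kj}T^{(M)}_{il}
   - T^{(R)}_{kj}T^{(M-1)}_{il}
   + (-1)^{p(k)+p(l)} (-T^{(M)}_{-k,j}T^{(R-1)}_{-i,l} + T^{(M-1)}_{-k,j}T^{(R)}_{-i,l}
       + T^{(R-1)}_{k,-j}T^{(M)}_{i,-l} - T^{(R)}_{k,-j}T^{(M-1)}_{i,-l})`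
(here `M = m+1`, `R = r+1`), together with `T^{(m)}_{-i,-j} = (-1)^m T^{(m)}_{i,j}`. -/
inductive YRel (n : ℕ) : FreeAlgebra ℂ (YGen n) → FreeAlgebra ℂ (YGen n) → Prop
  | quad (m r : ℕ) (i j k l : QIdx n) : YRel n
      (((-1 : ℂ) ^ (qpar i * qpar k + qpar i * qpar l + qpar k * qpar l)) •
        (ybr (m + 2) i j r k l - ybr m i j (r + 2) k l))
      (Tf (m + 1) k j * Tf r i l + Tf m k j * Tf (r + 1) i l -
        Tf r k j * Tf (m + 1) i l - Tf (r + 1) k j * Tf m i l +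
        ((-1 : ℂ) ^ (qpar k + qpar l)) •
          (-(Tf (m + 1) (qneg k) j * Tf r (qneg i) l) +
            Tf m (qneg k) j * Tf (r + 1) (qneg i) l +
            Tf r k (qneg j) * Tf (m + 1) i (qneg l) -
            Tf (r + 1) k (qneg j) * Tf m i (qneg l)))
  | par (m : ℕ) (i j : QIdx n) : YRel n
      (Tf (m + 1) (qneg i) (qneg j)) (((-1 : ℂ) ^ (m + 1)) • Tf (m + 1) i j)

/-- The super-Yangian `Y(Q(n))`. -/
abbrev YQ (n : ℕ) := RingQuot (YRel n)

/-- The generator `T^{(m)}_{i,j}` of `Y(Q(n))` (with `T^{(0)}_{i,j} = δ_{ij}`). -/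
def TY {n : ℕ} (m : ℕ) (i j : QIdx n) : YQ n :=
  RingQuot.mkAlgHom ℂ (YRel n) (Tf m i j)

/-! # Values of the homomorphisms `U`, `ev`, `ēv` on the generators of `Y(Q(n))`,
and the explicit sums appearing in the main theorems. -/

/-- The value of the homomorphism `U : Y(Q(n)) → U(Q(n))` on the generator
`T^{(r)}_{i,j}`:  `U(T^{(r)}_{i,j}) = (-1)^r e^{(r)}_{j,i}`,
`U(T^{(r)}_{-i,j}) = (-1)^r f^{(r)}_{j,i}` for `i, j > 0`, and the values on the other
generators are forced by `T^{(r)}_{-i,-j} = (-1)^r T^{(r)}_{i,j}`. -/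
def Uval {n : ℕ} (r : ℕ) (i j : QIdx n) : UQ n :=
  (if j.1 then (-1 : ℂ) ^ r else 1) •
    ((-1 : ℂ) ^ r • (if xor i.1 j.1 then fU r j.2 i.2 else eU r j.2 i.2))

/-- The value of the evaluation homomorphism `ev : Y(Q(n)) → U(Q(n))` on `T^{(r)}_{i,j}`:
`ev(T^{(1)}_{i,j}) = -e_{j,i}`, `ev(T^{(1)}_{-i,j}) = -f_{j,i}` for `i, j > 0`,
`ev(T^{(0)}_{i,j}) = δ_{ij}` and `ev(T^{(r)}_{i,j}) = 0` for `r > 1` (with the values on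
the remaining generators forced by `T^{(r)}_{-i,-j} = (-1)^r T^{(r)}_{i,j}`). -/
def evval {n : ℕ} (r : ℕ) (i j : QIdx n) : UQ n :=
  (if j.1 then (-1 : ℂ) ^ r else 1) •
    (match r with
      | 0 => if xor i.1 j.1 then 0 else algebraMap ℂ (UQ n) (kd i.2 j.2)
      | 1 => -(if xor i.1 j.1 then Uf j.2 i.2 else Ue j.2 i.2)
      | _ + 2 => 0)

/-- The value of `ēv = α ∘ ev : Y(Q(n)) → U(Q(n))` on `T^{(r)}_{i,j}`, where `α` is the
principal anti-automorphism of `U(Q(n))`:  `ēv(T^{(1)}_{i,j}) = e_{j,i}`,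
`ēv(T^{(1)}_{-i,j}) = f_{j,i}` for `i, j > 0`, `ēv(T^{(0)}_{i,j}) = δ_{ij}`,
`ēv(T^{(r)}_{i,j}) = 0` for `r > 1`. -/
def bevval {n : ℕ} (r : ℕ) (i j : QIdx n) : UQ n :=
  (if j.1 then (-1 : ℂ) ^ r else 1) •
    (match r with
      | 0 => if xor i.1 j.1 then 0 else algebraMap ℂ (UQ n) (kd i.2 j.2)
      | 1 => (if xor i.1 j.1 then Uf j.2 i.2 else Ue j.2 i.2)
      | _ + 2 => 0)

/-- The sum `Σ_{p_1,…,p_{r-1}} Σ_{l ≥ i_1 ≥ i_2 ≥ … ≥ i_r ≥ 1}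
Π_{a=1}^r (x^{i_a}_{p_{a-1},p_a} + (-1)^{r-a} ξ^{i_a}_{p_{a-1},p_a})`
(with `p_0 = p`, `p_r = q`), an element of `U(Q(m))^{⊗l}`. -/
def chainProdDec (m l : ℕ) (r : ℕ) (p q : Fin m) : TQ m l :=
  ∑ c : Fin (r + 1) → Fin m, ∑ iv : Fin r → Fin l,
    (if c 0 = p ∧ c (Fin.last r) = q ∧ (∀ a b : Fin r, a ≤ b → iv b ≤ iv a)
      then (1 : ℂ) else 0) •
      (List.ofFn fun a : Fin r =>
        xT (iv a) (c a.castSucc) (c a.succ) +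
          ((-1 : ℂ) ^ (r - 1 - a.val)) • xiT (iv a) (c a.castSucc) (c a.succ)).prod

/-- The sum `Σ_{p_1,…,p_{r-1}} Σ_{1 ≤ i_1 < i_2 < … < i_r ≤ l}
Π_{a=1}^r (x^{i_a}_{p_{a-1},p_a} + (-1)^{r-a} ξ^{i_a}_{p_{a-1},p_a})`
(with `p_0 = p`, `p_r = q`), an element of `U(Q(m))^{⊗l}`. -/
def chainProdInc (m l : ℕ) (r : ℕ) (p q : Fin m) : TQ m l :=
  ∑ c : Fin (r + 1) → Fin m, ∑ iv : Fin r → Fin l,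
    (if c 0 = p ∧ c (Fin.last r) = q ∧ (∀ a b : Fin r, a < b → iv a < iv b)
      then (1 : ℂ) else 0) •
      (List.ofFn fun a : Fin r =>
        xT (iv a) (c a.castSucc) (c a.succ) +
          ((-1 : ℂ) ^ (r - 1 - a.val)) • xiT (iv a) (c a.castSucc) (c a.succ)).prod

/-- The elements `z^{(r)}_{±q,p}` of `U(Q(m))^{⊗l}`:  the even (`sgn = false`,
giving `z^{(r)}_{q,p}`) resp. odd (`sgn = true`, giving `z^{(r)}_{-q,p}`) component of
`chainProdDec`, computed using the parity involution `σT` of `U(Q(m))^{⊗l}`;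
`z^{(0)}_{q,p} = δ_{qp}`, `z^{(0)}_{-q,p} = 0`. -/
def zDec {m l : ℕ} (σT : TQ m l →ₐ[ℂ] TQ m l) :
    ℕ → Bool → Fin m → Fin m → TQ m l
  | 0, sgn, q, p => if sgn then 0 else algebraMap ℂ (TQ m l) (kd q p)
  | r + 1, sgn, q, p =>
      (2⁻¹ : ℂ) • (chainProdDec m l (r + 1) p q +
        (if sgn then (-1 : ℂ) else 1) • σT (chainProdDec m l (r + 1) p q))

/-- The elements `z̃^{(r)}_{±q,p}` of `U(Q(m))^{⊗l}` (as `zDec`, with increasing chains). -/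
def zInc {m l : ℕ} (σT : TQ m l →ₐ[ℂ] TQ m l) :
    ℕ → Bool → Fin m → Fin m → TQ m l
  | 0, sgn, q, p => if sgn then 0 else algebraMap ℂ (TQ m l) (kd q p)
  | r + 1, sgn, q, p =>
      (2⁻¹ : ℂ) • (chainProdInc m l (r + 1) p q +
        (if sgn then (-1 : ℂ) else 1) • σT (chainProdInc m l (r + 1) p q))

/-- The explicit formula for the antipode value `S(T^{(r)}_{i,j})` (`r ≥ 1`):
`S(T^{(r)}_{i,j}) = Σ_{m=1}^{r} (-1)^m Σ_{i_1,…,i_{m-1}} Σ_{r_1+⋯+r_m=r, r_a>0}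
(-1)^{ν(i,i_1,…,i_{m-1},j)} T^{(r_1)}_{i,i_1} ⋯ T^{(r_m)}_{i_{m-1},j}` where
`ν(i_0,…,i_m) = Σ_{0≤k<s≤m-1} (p(i_k)+p(i_{k+1}))(p(i_s)+p(i_{s+1}))`. -/
def STval {n : ℕ} (r : ℕ) (i j : QIdx n) : YQ n :=
  ∑ m : Fin r,
    ((-1 : ℂ) ^ (m.val + 1)) •
      ∑ ch : Fin (m.val + 2) → QIdx n, ∑ c : Fin (m.val + 1) → Fin (r + 1),
        (if ch 0 = i ∧ ch (Fin.last (m.val + 1)) = j ∧ (∀ a, 1 ≤ (c a).val) ∧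
              (∑ a, (c a).val) = r
          then ((-1 : ℂ) ^ (∑ a : Fin (m.val + 1), ∑ b : Fin (m.val + 1),
              if a < b then
                (qpar (ch a.castSucc) + qpar (ch a.succ)) *
                  (qpar (ch b.castSucc) + qpar (ch b.succ))
              else 0))
          else 0) •
        (List.ofFn fun a : Fin (m.val + 1) =>
          TY (c a).val (ch a.castSucc) (ch a.succ)).prod


/-! ### Auxiliary development for statement4 -/

section Statement4Aux

variable {n : ℕ}

lemma kd_self (i : Fin n) : kd i i = 1 := if_pos rfl
lemma kd_ne {i j : Fin n} (h : i ≠ j) : kd i j = 0 := if_neg h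

lemma swap_ee (i j k l : Fin n) :
    Ue i j * Ue k l - Ue k l * Ue i j = kd j k • Ue i l - kd l i • Ue k j := by
  have h := RingQuot.mkAlgHom_rel ℂ (QRel.ee i j k l)
  simpa [Ue, map_sub, map_mul, map_smul] using h

lemma swap_ef (i j k l : Fin n) :
    Ue i j * Uf k l - Uf k l * Ue i j = kd j k • Uf i l - kd l i • Uf k j := by
  have h := RingQuot.mkAlgHom_rel ℂ (QRel.ef i j k l)
  simpa [Ue, Uf, map_sub, map_mul, map_smul] using h

lemma swap_fe (i j k l : Fin n) :
    Uf i j * Ue k l - Ue k l * Uf i j = kd j k • Uf i l - kd l i • Uf k j := by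
  have h := swap_ef k l i j
  have h2 : -(Ue k l * Uf i j - Uf i j * Ue k l) = -(kd l i • Uf k j - kd j k • Uf i l) :=
    congrArg Neg.neg h
  calc Uf i j * Ue k l - Ue k l * Uf i j
      = -(Ue k l * Uf i j - Uf i j * Ue k l) := by abel
    _ = -(kd l i • Uf k j - kd j k • Uf i l) := h2
    _ = kd j k • Uf i l - kd l i • Uf k j := neg_sub _ _
  
lemma swap_ff (i j k l : Fin n) :
    Uf i j * Uf k l + Uf k l * Uf i j = kd j k • Ue i l + kd l i • Ue k j := by
  have h := RingQuot.mkAlgHom_rel ℂ (QRel.ff i j k l)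
  simpa [Uf, Ue, map_add, map_mul, map_smul] using h

lemma sum_kd_l (α : Fin n) (g : Fin n → UQ n) : (∑ k, kd k α • g k) = g α := by
  simp [kd, ite_smul]

lemma sum_kd_r (β : Fin n) (g : Fin n → UQ n) : (∑ k, kd β k • g k) = g β := by
  simp [kd, ite_smul]

lemma comm_mul {R : Type*} [Ring R] {x y E S T : R}
    (h1 : x * y - y * x = S) (h2 : x * E - E * x = T) :
    x * (y * E) - (y * E) * x = S * E + y * T := by
  have e1 := eq_add_of_sub_eq h1
  have e2 := eq_add_of_sub_eq h2
  calc x * (y * E) - (y * E) * x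
      = (x * y) * E - (y * E) * x := by rw [← mul_assoc x y E]
    _ = (S + y * x) * E - (y * E) * x := by rw [e1]
    _ = S * E + y * (x * E) - (y * E) * x := by rw [add_mul, mul_assoc y x E]
    _ = S * E + y * (T + E * x) - (y * E) * x := by rw [e2]
    _ = S * E + y * T := by rw [mul_add, ← mul_assoc y E x]; abel

lemma acomm_mul {R : Type*} [Ring R] {x y E S T : R}
    (h1 : x * y + y * x = S) (h2 : x * E + E * x = T) :
    x * (y * E) - (y * E) * x = S * E - y * T := by
  have e1 := eq_sub_of_add_eq h1
  have e2 := eq_sub_of_add_eq h2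
  calc x * (y * E) - (y * E) * x
      = (x * y) * E - (y * E) * x := by rw [← mul_assoc x y E]
    _ = (S - y * x) * E - (y * E) * x := by rw [e1]
    _ = S * E - y * (x * E) - (y * E) * x := by rw [sub_mul, mul_assoc y x E]
    _ = S * E - y * (T - E * x) - (y * E) * x := by rw [e2]
    _ = S * E - y * T := by rw [mul_sub, ← mul_assoc y E x]; abel

lemma mixed1_mul {R : Type*} [Ring R] {x y E S T : R}
    (h1 : x * y - y * x = S) (h2 : x * E + E * x = T) :
    x * (y * E) + (y * E) * x = S * E + y * T := by
  have e1 := eq_add_of_sub_eq h1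
  have e2 := eq_sub_of_add_eq h2
  calc x * (y * E) + (y * E) * x
      = (x * y) * E + (y * E) * x := by rw [← mul_assoc x y E]
    _ = (S + y * x) * E + (y * E) * x := by rw [e1]
    _ = S * E + y * (x * E) + (y * E) * x := by rw [add_mul, mul_assoc y x E]
    _ = S * E + y * (T - E * x) + (y * E) * x := by rw [e2]
    _ = S * E + y * T := by rw [mul_sub, ← mul_assoc y E x]; abel

lemma mixed2_mul {R : Type*} [Ring R] {x y E S T : R}
    (h1 : x * y + y * x = S) (h2 : x * E - E * x = T) :
    x * (y * E) + (y * E) * x = S * E - y * T := by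
  have e1 := eq_sub_of_add_eq h1
  have e2 := eq_add_of_sub_eq h2
  calc x * (y * E) + (y * E) * x
      = (x * y) * E + (y * E) * x := by rw [← mul_assoc x y E]
    _ = (S - y * x) * E + (y * E) * x := by rw [e1]
    _ = S * E - y * (x * E) + (y * E) * x := by rw [sub_mul, mul_assoc y x E]
    _ = S * E - y * (T + E * x) + (y * E) * x := by rw [e2]
    _ = S * E - y * T := by rw [mul_add, ← mul_assoc y E x]; abel

lemma eU_zero (i j : Fin n) : eU 0 i j = algebraMap ℂ (UQ n) (kd i j) := rfl
lemma fU_zero (i j : Fin n) : fU 0 i j = 0 := rfl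
lemma eU_succ (r : ℕ) (i j : Fin n) :
    eU (r + 1) i j = (∑ k, Ue i k * eU r k j) + (-1 : ℂ) ^ r • ∑ k, Uf i k * fU r k j := rfl
lemma fU_succ (r : ℕ) (i j : Fin n) :
    fU (r + 1) i j = (∑ k, Ue i k * fU r k j) + (-1 : ℂ) ^ r • ∑ k, Uf i k * eU r k j := rfl

end Statement4Aux

section AdjAll
variable {n : ℕ}

lemma kd_comm (i j : Fin n) : kd i j = kd j i := by
  unfold kd; split_ifs with h1 h2
  · rfl
  · exact absurd h1.symm h2
  · exact absurd ‹j = i›.symm h1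
  · rfl

lemma kd_square (α β γ δ : Fin n) : kd β γ * kd α δ = kd δ α * kd γ β := by
  rcases eq_or_ne β γ with rfl | h1
  · rcases eq_or_ne α δ with rfl | h2
    · simp [kd]
    · simp [kd, h2, Ne.symm h2]
  · rcases eq_or_ne α δ with rfl | h2
    · simp [kd, h1, Ne.symm h1]
    · simp [kd, h1, h2, Ne.symm h1, Ne.symm h2]

lemma smul_alg (c d : ℂ) : c • (algebraMap ℂ (UQ n) d) = algebraMap ℂ (UQ n) (c * d) := by
  rw [Algebra.smul_def, ← map_mul]

theorem adj_all (n : ℕ) : ∀ (r : ℕ) (α β γ δ : Fin n),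
    (Ue α β * eU r γ δ - eU r γ δ * Ue α β = kd β γ • eU r α δ - kd δ α • eU r γ β) ∧
    (Ue α β * fU r γ δ - fU r γ δ * Ue α β = kd β γ • fU r α δ - kd δ α • fU r γ β) ∧
    (Uf α β * eU r γ δ - eU r γ δ * Uf α β
      = ((-1 : ℂ) ^ (r + 1) * kd β γ) • fU r α δ - kd δ α • fU r γ β) ∧
    (Uf α β * fU r γ δ + fU r γ δ * Uf α β
      = ((-1 : ℂ) ^ (r + 1) * kd β γ) • eU r α δ + kd δ α • eU r γ β) := by
  intro r
  induction r with
  | zero =>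
    intro α β γ δ
    refine ⟨?_, ?_, ?_, ?_⟩
    · simp only [eU_zero, smul_alg]
      rw [← map_sub]
      have h0 : kd β γ * kd α δ - kd δ α * kd γ β = 0 := by rw [kd_square]; ring
      rw [h0, map_zero, ← Algebra.commutes (kd γ δ) (Ue α β)]
      exact sub_self _
    · simp [fU_zero]
    · simp only [eU_zero, fU_zero]
      simp [Algebra.commutes]
    · simp only [fU_zero, eU_zero, smul_alg]
      rw [← map_add]
      have h0 : (-1 : ℂ) ^ (0 + 1) * kd β γ * kd α δ + kd δ α * kd γ β = 0 := by
        have h := kd_square α β γ δ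
        linear_combination -h
      rw [h0, map_zero]
      simp
  | succ r ih =>
    intro α β γ δ
    have ihA : ∀ a b c d : Fin n, Ue a b * eU r c d - eU r c d * Ue a b
        = kd b c • eU r a d - kd d a • eU r c b := fun a b c d => (ih a b c d).1
    have ihB : ∀ a b c d : Fin n, Ue a b * fU r c d - fU r c d * Ue a b
        = kd b c • fU r a d - kd d a • fU r c b := fun a b c d => (ih a b c d).2.1
    have ihC : ∀ a b c d : Fin n, Uf a b * eU r c d - eU r c d * Uf a b
        = ((-1 : ℂ) ^ (r + 1) * kd b c) • fU r a d - kd d a • fU r c b :=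
      fun a b c d => (ih a b c d).2.2.1
    have ihD : ∀ a b c d : Fin n, Uf a b * fU r c d + fU r c d * Uf a b
        = ((-1 : ℂ) ^ (r + 1) * kd b c) • eU r a d + kd d a • eU r c b :=
      fun a b c d => (ih a b c d).2.2.2
    have expandC : ∀ u A B : UQ n, u * (A + (-1 : ℂ) ^ r • B) - (A + (-1 : ℂ) ^ r • B) * u
        = (u * A - A * u) + (-1 : ℂ) ^ r • (u * B - B * u) := by
      intro u A B
      rw [mul_add, add_mul, mul_smul_comm, smul_mul_assoc, smul_sub]; abel
    have expandD : ∀ u A B : UQ n, u * (A + (-1 : ℂ) ^ r • B) + (A + (-1 : ℂ) ^ r • B) * u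
        = (u * A + A * u) + (-1 : ℂ) ^ r • (u * B + B * u) := by
      intro u A B
      rw [mul_add, add_mul, mul_smul_comm, smul_mul_assoc, smul_add]; abel
    refine ⟨?_, ?_, ?_, ?_⟩
    -- Part A
    · have he : Ue α β * (∑ k, Ue γ k * eU r k δ) - (∑ k, Ue γ k * eU r k δ) * Ue α β
          = kd β γ • (∑ k, Ue α k * eU r k δ) - kd δ α • (∑ k, Ue γ k * eU r k β) := by
        have hk : ∀ k : Fin n, Ue α β * (Ue γ k * eU r k δ) - (Ue γ k * eU r k δ) * Ue α β
            = kd β γ • (Ue α k * eU r k δ) - kd k α • (Ue γ β * eU r k δ)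
              + (kd β k • (Ue γ k * eU r α δ) - kd δ α • (Ue γ k * eU r k β)) := by
          intro k
          rw [comm_mul (swap_ee α β γ k) (ihA α β k δ)]
          simp only [sub_mul, add_mul, smul_mul_assoc, mul_sub, mul_add, mul_smul_comm]
        rw [Finset.mul_sum, Finset.sum_mul, ← Finset.sum_sub_distrib,
          Finset.sum_congr rfl (fun k _ => hk k),
          Finset.sum_add_distrib, Finset.sum_sub_distrib, Finset.sum_sub_distrib]
        have hs1 : (∑ k, kd β γ • (Ue α k * eU r k δ))
            = kd β γ • ∑ k, Ue α k * eU r k δ := (Finset.smul_sum).symm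
        have hs2 : (∑ k, kd k α • (Ue γ β * eU r k δ)) = Ue γ β * eU r α δ := sum_kd_l α _
        have hs3 : (∑ k, kd β k • (Ue γ k * eU r α δ)) = Ue γ β * eU r α δ := sum_kd_r β _
        have hs4 : (∑ k, kd δ α • (Ue γ k * eU r k β))
            = kd δ α • ∑ k, Ue γ k * eU r k β := (Finset.smul_sum).symm
        rw [hs1, hs2, hs3, hs4]; abel
      have hf : Ue α β * (∑ k, Uf γ k * fU r k δ) - (∑ k, Uf γ k * fU r k δ) * Ue α β
          = kd β γ • (∑ k, Uf α k * fU r k δ) - kd δ α • (∑ k, Uf γ k * fU r k β) := by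
        have hk : ∀ k : Fin n, Ue α β * (Uf γ k * fU r k δ) - (Uf γ k * fU r k δ) * Ue α β
            = kd β γ • (Uf α k * fU r k δ) - kd k α • (Uf γ β * fU r k δ)
              + (kd β k • (Uf γ k * fU r α δ) - kd δ α • (Uf γ k * fU r k β)) := by
          intro k
          rw [comm_mul (swap_ef α β γ k) (ihB α β k δ)]
          simp only [sub_mul, add_mul, smul_mul_assoc, mul_sub, mul_add, mul_smul_comm]
        rw [Finset.mul_sum, Finset.sum_mul, ← Finset.sum_sub_distrib,
          Finset.sum_congr rfl (fun k _ => hk k),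
          Finset.sum_add_distrib, Finset.sum_sub_distrib, Finset.sum_sub_distrib]
        have hs1 : (∑ k, kd β γ • (Uf α k * fU r k δ))
            = kd β γ • ∑ k, Uf α k * fU r k δ := (Finset.smul_sum).symm
        have hs2 : (∑ k, kd k α • (Uf γ β * fU r k δ)) = Uf γ β * fU r α δ := sum_kd_l α _
        have hs3 : (∑ k, kd β k • (Uf γ k * fU r α δ)) = Uf γ β * fU r α δ := sum_kd_r β _
        have hs4 : (∑ k, kd δ α • (Uf γ k * fU r k β))
            = kd δ α • ∑ k, Uf γ k * fU r k β := (Finset.smul_sum).symm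
        rw [hs1, hs2, hs3, hs4]; abel
      simp only [eU_succ]
      rw [expandC, he, hf]
      rcases Nat.even_or_odd r with hpar | hpar <;>
        simp only [pow_succ, hpar.neg_one_pow] <;> module
    -- Part B
    · have he : Ue α β * (∑ k, Ue γ k * fU r k δ) - (∑ k, Ue γ k * fU r k δ) * Ue α β
          = kd β γ • (∑ k, Ue α k * fU r k δ) - kd δ α • (∑ k, Ue γ k * fU r k β) := by
        have hk : ∀ k : Fin n, Ue α β * (Ue γ k * fU r k δ) - (Ue γ k * fU r k δ) * Ue α β
            = kd β γ • (Ue α k * fU r k δ) - kd k α • (Ue γ β * fU r k δ)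
              + (kd β k • (Ue γ k * fU r α δ) - kd δ α • (Ue γ k * fU r k β)) := by
          intro k
          rw [comm_mul (swap_ee α β γ k) (ihB α β k δ)]
          simp only [sub_mul, add_mul, smul_mul_assoc, mul_sub, mul_add, mul_smul_comm]
        rw [Finset.mul_sum, Finset.sum_mul, ← Finset.sum_sub_distrib,
          Finset.sum_congr rfl (fun k _ => hk k),
          Finset.sum_add_distrib, Finset.sum_sub_distrib, Finset.sum_sub_distrib]
        have hs1 : (∑ k, kd β γ • (Ue α k * fU r k δ))
            = kd β γ • ∑ k, Ue α k * fU r k δ := (Finset.smul_sum).symm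
        have hs2 : (∑ k, kd k α • (Ue γ β * fU r k δ)) = Ue γ β * fU r α δ := sum_kd_l α _
        have hs3 : (∑ k, kd β k • (Ue γ k * fU r α δ)) = Ue γ β * fU r α δ := sum_kd_r β _
        have hs4 : (∑ k, kd δ α • (Ue γ k * fU r k β))
            = kd δ α • ∑ k, Ue γ k * fU r k β := (Finset.smul_sum).symm
        rw [hs1, hs2, hs3, hs4]; abel
      have hf : Ue α β * (∑ k, Uf γ k * eU r k δ) - (∑ k, Uf γ k * eU r k δ) * Ue α β
          = kd β γ • (∑ k, Uf α k * eU r k δ) - kd δ α • (∑ k, Uf γ k * eU r k β) := by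
        have hk : ∀ k : Fin n, Ue α β * (Uf γ k * eU r k δ) - (Uf γ k * eU r k δ) * Ue α β
            = kd β γ • (Uf α k * eU r k δ) - kd k α • (Uf γ β * eU r k δ)
              + (kd β k • (Uf γ k * eU r α δ) - kd δ α • (Uf γ k * eU r k β)) := by
          intro k
          rw [comm_mul (swap_ef α β γ k) (ihA α β k δ)]
          simp only [sub_mul, add_mul, smul_mul_assoc, mul_sub, mul_add, mul_smul_comm]
        rw [Finset.mul_sum, Finset.sum_mul, ← Finset.sum_sub_distrib,
          Finset.sum_congr rfl (fun k _ => hk k),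
          Finset.sum_add_distrib, Finset.sum_sub_distrib, Finset.sum_sub_distrib]
        have hs1 : (∑ k, kd β γ • (Uf α k * eU r k δ))
            = kd β γ • ∑ k, Uf α k * eU r k δ := (Finset.smul_sum).symm
        have hs2 : (∑ k, kd k α • (Uf γ β * eU r k δ)) = Uf γ β * eU r α δ := sum_kd_l α _
        have hs3 : (∑ k, kd β k • (Uf γ k * eU r α δ)) = Uf γ β * eU r α δ := sum_kd_r β _
        have hs4 : (∑ k, kd δ α • (Uf γ k * eU r k β))
            = kd δ α • ∑ k, Uf γ k * eU r k β := (Finset.smul_sum).symm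
        rw [hs1, hs2, hs3, hs4]; abel
      simp only [fU_succ]
      rw [expandC, he, hf]
      rcases Nat.even_or_odd r with hpar | hpar <;>
        simp only [pow_succ, hpar.neg_one_pow] <;> module
    -- Part C
    · have he : Uf α β * (∑ k, Ue γ k * eU r k δ) - (∑ k, Ue γ k * eU r k δ) * Uf α β
          = kd β γ • (∑ k, Uf α k * eU r k δ) - Uf γ β * eU r α δ
            + ((-1 : ℂ) ^ (r + 1) • (Ue γ β * fU r α δ) - kd δ α • (∑ k, Ue γ k * fU r k β)) := by
        have hk : ∀ k : Fin n, Uf α β * (Ue γ k * eU r k δ) - (Ue γ k * eU r k δ) * Uf α β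
            = kd β γ • (Uf α k * eU r k δ) - kd k α • (Uf γ β * eU r k δ)
              + (((-1 : ℂ) ^ (r + 1) * kd β k) • (Ue γ k * fU r α δ)
                - kd δ α • (Ue γ k * fU r k β)) := by
          intro k
          rw [comm_mul (swap_fe α β γ k) (ihC α β k δ)]
          simp only [sub_mul, add_mul, smul_mul_assoc, mul_sub, mul_add, mul_smul_comm]
        rw [Finset.mul_sum, Finset.sum_mul, ← Finset.sum_sub_distrib,
          Finset.sum_congr rfl (fun k _ => hk k),
          Finset.sum_add_distrib, Finset.sum_sub_distrib, Finset.sum_sub_distrib]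
        have hs1 : (∑ k, kd β γ • (Uf α k * eU r k δ))
            = kd β γ • ∑ k, Uf α k * eU r k δ := (Finset.smul_sum).symm
        have hs2 : (∑ k, kd k α • (Uf γ β * eU r k δ)) = Uf γ β * eU r α δ := sum_kd_l α _
        have hs3 : (∑ k, ((-1 : ℂ) ^ (r + 1) * kd β k) • (Ue γ k * fU r α δ))
            = (-1 : ℂ) ^ (r + 1) • (Ue γ β * fU r α δ) := by
          simp only [mul_smul]
          rw [← Finset.smul_sum]
          exact congrArg (fun z => (-1 : ℂ) ^ (r + 1) • z) (sum_kd_r β _)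
        have hs4 : (∑ k, kd δ α • (Ue γ k * fU r k β))
            = kd δ α • ∑ k, Ue γ k * fU r k β := (Finset.smul_sum).symm
        rw [hs1, hs2, hs3, hs4]
      have hf : Uf α β * (∑ k, Uf γ k * fU r k δ) - (∑ k, Uf γ k * fU r k δ) * Uf α β
          = kd β γ • (∑ k, Ue α k * fU r k δ) + Ue γ β * fU r α δ
            - ((-1 : ℂ) ^ (r + 1) • (Uf γ β * eU r α δ) + kd δ α • (∑ k, Uf γ k * eU r k β)) := by
        have hk : ∀ k : Fin n, Uf α β * (Uf γ k * fU r k δ) - (Uf γ k * fU r k δ) * Uf α β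
            = kd β γ • (Ue α k * fU r k δ) + kd k α • (Ue γ β * fU r k δ)
              - (((-1 : ℂ) ^ (r + 1) * kd β k) • (Uf γ k * eU r α δ)
                + kd δ α • (Uf γ k * eU r k β)) := by
          intro k
          rw [acomm_mul (swap_ff α β γ k) (ihD α β k δ)]
          simp only [sub_mul, add_mul, smul_mul_assoc, mul_sub, mul_add, mul_smul_comm]
        rw [Finset.mul_sum, Finset.sum_mul, ← Finset.sum_sub_distrib,
          Finset.sum_congr rfl (fun k _ => hk k),
          Finset.sum_sub_distrib, Finset.sum_add_distrib, Finset.sum_add_distrib]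
        have hs1 : (∑ k, kd β γ • (Ue α k * fU r k δ))
            = kd β γ • ∑ k, Ue α k * fU r k δ := (Finset.smul_sum).symm
        have hs2 : (∑ k, kd k α • (Ue γ β * fU r k δ)) = Ue γ β * fU r α δ := sum_kd_l α _
        have hs3 : (∑ k, ((-1 : ℂ) ^ (r + 1) * kd β k) • (Uf γ k * eU r α δ))
            = (-1 : ℂ) ^ (r + 1) • (Uf γ β * eU r α δ) := by
          simp only [mul_smul]
          rw [← Finset.smul_sum]
          exact congrArg (fun z => (-1 : ℂ) ^ (r + 1) • z) (sum_kd_r β _)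
        have hs4 : (∑ k, kd δ α • (Uf γ k * eU r k β))
            = kd δ α • ∑ k, Uf γ k * eU r k β := (Finset.smul_sum).symm
        rw [hs1, hs2, hs3, hs4]
      simp only [eU_succ, fU_succ]
      rw [expandC, he, hf]
      rcases Nat.even_or_odd r with hpar | hpar <;>
        simp only [pow_succ, hpar.neg_one_pow] <;> module
    -- Part D
    · have he : Uf α β * (∑ k, Ue γ k * fU r k δ) + (∑ k, Ue γ k * fU r k δ) * Uf α β
          = kd β γ • (∑ k, Uf α k * fU r k δ) - Uf γ β * fU r α δ
            + ((-1 : ℂ) ^ (r + 1) • (Ue γ β * eU r α δ) + kd δ α • (∑ k, Ue γ k * eU r k β)) := by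
        have hk : ∀ k : Fin n, Uf α β * (Ue γ k * fU r k δ) + (Ue γ k * fU r k δ) * Uf α β
            = kd β γ • (Uf α k * fU r k δ) - kd k α • (Uf γ β * fU r k δ)
              + (((-1 : ℂ) ^ (r + 1) * kd β k) • (Ue γ k * eU r α δ)
                + kd δ α • (Ue γ k * eU r k β)) := by
          intro k
          rw [mixed1_mul (swap_fe α β γ k) (ihD α β k δ)]
          simp only [sub_mul, add_mul, smul_mul_assoc, mul_sub, mul_add, mul_smul_comm]
        rw [Finset.mul_sum, Finset.sum_mul, ← Finset.sum_add_distrib,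
          Finset.sum_congr rfl (fun k _ => hk k),
          Finset.sum_add_distrib, Finset.sum_sub_distrib, Finset.sum_add_distrib]
        have hs1 : (∑ k, kd β γ • (Uf α k * fU r k δ))
            = kd β γ • ∑ k, Uf α k * fU r k δ := (Finset.smul_sum).symm
        have hs2 : (∑ k, kd k α • (Uf γ β * fU r k δ)) = Uf γ β * fU r α δ := sum_kd_l α _
        have hs3 : (∑ k, ((-1 : ℂ) ^ (r + 1) * kd β k) • (Ue γ k * eU r α δ))
            = (-1 : ℂ) ^ (r + 1) • (Ue γ β * eU r α δ) := by
          simp only [mul_smul]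
          rw [← Finset.smul_sum]
          exact congrArg (fun z => (-1 : ℂ) ^ (r + 1) • z) (sum_kd_r β _)
        have hs4 : (∑ k, kd δ α • (Ue γ k * eU r k β))
            = kd δ α • ∑ k, Ue γ k * eU r k β := (Finset.smul_sum).symm
        rw [hs1, hs2, hs3, hs4]
      have hf : Uf α β * (∑ k, Uf γ k * eU r k δ) + (∑ k, Uf γ k * eU r k δ) * Uf α β
          = kd β γ • (∑ k, Ue α k * eU r k δ) + Ue γ β * eU r α δ
            - ((-1 : ℂ) ^ (r + 1) • (Uf γ β * fU r α δ) - kd δ α • (∑ k, Uf γ k * fU r k β)) := by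
        have hk : ∀ k : Fin n, Uf α β * (Uf γ k * eU r k δ) + (Uf γ k * eU r k δ) * Uf α β
            = kd β γ • (Ue α k * eU r k δ) + kd k α • (Ue γ β * eU r k δ)
              - (((-1 : ℂ) ^ (r + 1) * kd β k) • (Uf γ k * fU r α δ)
                - kd δ α • (Uf γ k * fU r k β)) := by
          intro k
          rw [mixed2_mul (swap_ff α β γ k) (ihC α β k δ)]
          simp only [sub_mul, add_mul, smul_mul_assoc, mul_sub, mul_add, mul_smul_comm]
        rw [Finset.mul_sum, Finset.sum_mul, ← Finset.sum_add_distrib,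
          Finset.sum_congr rfl (fun k _ => hk k),
          Finset.sum_sub_distrib, Finset.sum_add_distrib, Finset.sum_sub_distrib]
        have hs1 : (∑ k, kd β γ • (Ue α k * eU r k δ))
            = kd β γ • ∑ k, Ue α k * eU r k δ := (Finset.smul_sum).symm
        have hs2 : (∑ k, kd k α • (Ue γ β * eU r k δ)) = Ue γ β * eU r α δ := sum_kd_l α _
        have hs3 : (∑ k, ((-1 : ℂ) ^ (r + 1) * kd β k) • (Uf γ k * fU r α δ))
            = (-1 : ℂ) ^ (r + 1) • (Uf γ β * fU r α δ) := by
          simp only [mul_smul]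
          rw [← Finset.smul_sum]
          exact congrArg (fun z => (-1 : ℂ) ^ (r + 1) • z) (sum_kd_r β _)
        have hs4 : (∑ k, kd δ α • (Uf γ k * fU r k β))
            = kd δ α • ∑ k, Uf γ k * fU r k β := (Finset.smul_sum).symm
        rw [hs1, hs2, hs3, hs4]
      simp only [eU_succ, fU_succ]
      rw [expandD, he, hf]
      rcases Nat.even_or_odd r with hpar | hpar <;>
        simp only [pow_succ, hpar.neg_one_pow] <;> module
end AdjAll

section MainClaim
variable {n l : ℕ}

lemma bidx_inj (h : l ∣ n) {p q : Fin (n / l)} {a b : Fin l} :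
    bidx h p a = bidx h q b ↔ p = q ∧ a = b := by
  constructor
  · intro he
    have hv : l * p.val + a.val = l * q.val + b.val := congrArg Fin.val he
    have ha := a.isLt
    have hb := b.isLt
    have hab : a.val = b.val := by
      have h1 : (l * p.val + a.val) % l = a.val := by
        rw [Nat.mul_add_mod]; exact Nat.mod_eq_of_lt ha
      have h2 : (l * q.val + b.val) % l = b.val := by
        rw [Nat.mul_add_mod]; exact Nat.mod_eq_of_lt hb
      rw [← h1, hv, h2]
    have hpq : p.val = q.val := by
      have h3 : l * p.val = l * q.val := by omega
      exact Nat.eq_of_mul_eq_mul_left (by omega) h3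
    exact ⟨Fin.ext hpq, Fin.ext hab⟩
  · rintro ⟨rfl, rfl⟩; rfl

lemma bidx_surj (h : l ∣ n) (hl : 0 < l) (k : Fin n) : ∃ s c, k = bidx h s c := by
  refine ⟨⟨k.val / l, Nat.div_lt_div_of_lt_of_dvd h k.isLt⟩, ⟨k.val % l, Nat.mod_lt _ hl⟩, ?_⟩
  apply Fin.ext
  exact (Nat.div_add_mod k.val l).symm

lemma mem_gen_e (h : l ∣ n) {p q : Fin (n / l)} {a b : Fin l} (hba : b.val < a.val) :
    Ue (bidx h p a) (bidx h q b)
      - algebraMap ℂ (UQ n) (if a.val = b.val + 1 ∧ p = q then 1 else 0) ∈ Ichi n l h :=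
  Submodule.subset_span ⟨p, q, a, b, hba, Or.inl rfl⟩

lemma mem_gen_f (h : l ∣ n) {p q : Fin (n / l)} {a b : Fin l} (hba : b.val < a.val) :
    Uf (bidx h p a) (bidx h q b) ∈ Ichi n l h :=
  Submodule.subset_span ⟨p, q, a, b, hba, Or.inr rfl⟩

lemma Ichi_mul_mem (h : l ∣ n) {x : UQ n} (u : UQ n) (hx : x ∈ Ichi n l h) :
    u * x ∈ Ichi n l h := by
  simpa [smul_eq_mul] using Submodule.smul_mem (Ichi n l h) u hx

lemma mul_gen_e (h : l ∣ n) (u : UQ n) {p q : Fin (n / l)} {a b : Fin l} (hba : b.val < a.val) :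
    u * Ue (bidx h p a) (bidx h q b)
      - (if a.val = b.val + 1 ∧ p = q then (1 : ℂ) else 0) • u ∈ Ichi n l h := by
  have h1 := Ichi_mul_mem h u (mem_gen_e h (p := p) (q := q) hba)
  have h2 : u * (Ue (bidx h p a) (bidx h q b)
        - algebraMap ℂ (UQ n) (if a.val = b.val + 1 ∧ p = q then 1 else 0))
      = u * Ue (bidx h p a) (bidx h q b)
        - (if a.val = b.val + 1 ∧ p = q then (1 : ℂ) else 0) • u := by
    rw [mul_sub, Algebra.smul_def, Algebra.commutes]
  rwa [h2] at h1

lemma mul_gen_f (h : l ∣ n) (u : UQ n) {p q : Fin (n / l)} {a b : Fin l} (hba : b.val < a.val) :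
    u * Uf (bidx h p a) (bidx h q b) ∈ Ichi n l h :=
  Ichi_mul_mem h u (mem_gen_f h hba)

end MainClaim

theorem main_claim (n l : ℕ) (hl : 0 < l) (h : l ∣ n) :
    ∀ (r : ℕ) (p q : Fin (n / l)) (a b : Fin l), b.val + r ≤ a.val →
      (eU r (bidx h p a) (bidx h q b)
          - algebraMap ℂ (UQ n) (if p = q ∧ a.val = b.val + r then 1 else 0) ∈ Ichi n l h) ∧
      fU r (bidx h p a) (bidx h q b) ∈ Ichi n l h := by
  intro r
  induction r with
  | zero =>
    intro p q a b hba
    constructor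
    · have hkd : kd (bidx h p a) (bidx h q b)
          = (if p = q ∧ a.val = b.val + 0 then (1 : ℂ) else 0) := by
        unfold kd
        by_cases hc : bidx h p a = bidx h q b
        · rw [if_pos hc]
          obtain ⟨h1, h2⟩ := (bidx_inj h).mp hc
          rw [if_pos ⟨h1, by rw [h2]; omega⟩]
        · rw [if_neg hc, if_neg]
          rintro ⟨rfl, h2⟩
          exact hc ((bidx_inj h).mpr ⟨rfl, Fin.ext (by omega)⟩)
      rw [eU_zero, hkd, sub_self]
      exact Submodule.zero_mem _
    · rw [fU_zero]; exact Submodule.zero_mem _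
  | succ r IH =>
    intro p q a b hab
    have hal := a.isLt
    have hbrl : b.val + r < l := by omega
    have hne : bidx h q b ≠ bidx h p a := by
      intro hcon
      obtain ⟨_, h2⟩ := (bidx_inj h).mp hcon
      have := congrArg Fin.val h2; omega
    -- the third ingredient of the per-k proofs
    have hIHe : eU r (bidx h p a) (bidx h q b) ∈ Ichi n l h := by
      have H := (IH p q a b (by omega)).1
      rwa [if_neg (by rintro ⟨_, h2⟩; omega), map_zero, sub_zero] at H
    have hIHf : fU r (bidx h p a) (bidx h q b) ∈ Ichi n l h := (IH p q a b (by omega)).2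
    -- per-k memberships
    have hA : ∀ k : Fin n, Ue (bidx h p a) k * eU r k (bidx h q b)
        - algebraMap ℂ (UQ n)
            (if k = bidx h q ⟨b.val + r, hbrl⟩ ∧ p = q ∧ a.val = b.val + (r + 1)
              then 1 else 0) ∈ Ichi n l h := by
      intro k
      obtain ⟨s, c, rfl⟩ := bidx_surj h hl k
      by_cases hca : c.val < a.val
      · have hcomm := (adj_all n r (bidx h p a) (bidx h s c) (bidx h s c) (bidx h q b)).1
        rw [kd_self, one_smul, kd_ne hne, zero_smul, sub_zero] at hcomm
        have heq : Ue (bidx h p a) (bidx h s c) * eU r (bidx h s c) (bidx h q b)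
            - algebraMap ℂ (UQ n)
                (if bidx h s c = bidx h q ⟨b.val + r, hbrl⟩ ∧ p = q ∧ a.val = b.val + (r + 1)
                  then 1 else 0)
            = (eU r (bidx h s c) (bidx h q b) * Ue (bidx h p a) (bidx h s c)
                - (if a.val = c.val + 1 ∧ p = s then (1 : ℂ) else 0)
                    • eU r (bidx h s c) (bidx h q b))
              + ((if a.val = c.val + 1 ∧ p = s then (1 : ℂ) else 0)
                    • eU r (bidx h s c) (bidx h q b)
                - algebraMap ℂ (UQ n)
                    (if bidx h s c = bidx h q ⟨b.val + r, hbrl⟩ ∧ p = q ∧ a.val = b.val + (r + 1)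
                      then 1 else 0))
              + eU r (bidx h p a) (bidx h q b) := by
          rw [eq_add_of_sub_eq hcomm]; abel
        rw [heq]
        refine Submodule.add_mem _ (Submodule.add_mem _ (mul_gen_e h _ hca) ?_) hIHe
        by_cases hc : a.val = c.val + 1 ∧ p = s
        · rw [if_pos hc, one_smul]
          have hIH := (IH s q c b (by omega)).1
          have hscal : (if bidx h s c = bidx h q ⟨b.val + r, hbrl⟩ ∧ p = q
                ∧ a.val = b.val + (r + 1) then (1 : ℂ) else 0)
              = (if s = q ∧ c.val = b.val + r then (1 : ℂ) else 0) := by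
            apply if_congr _ rfl rfl
            constructor
            · rintro ⟨hk, hpq, ha⟩
              obtain ⟨h1, h2⟩ := (bidx_inj h).mp hk
              have := congrArg Fin.val h2
              exact ⟨h1, by simpa using this⟩
            · rintro ⟨h1, h2⟩
              refine ⟨(bidx_inj h).mpr ⟨h1, Fin.ext (by simpa using h2)⟩,
                hc.2.trans h1, by omega⟩
          rw [hscal]
          exact hIH
        · rw [if_neg hc, zero_smul]
          have hzero : (if bidx h s c = bidx h q ⟨b.val + r, hbrl⟩ ∧ p = q
                ∧ a.val = b.val + (r + 1) then (1 : ℂ) else 0) = 0 := by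
            rw [if_neg]
            rintro ⟨hk, hpq, ha⟩
            obtain ⟨h1, h2⟩ := (bidx_inj h).mp hk
            have hc2 := congrArg Fin.val h2
            exact hc ⟨by simp at hc2; omega, hpq.trans h1.symm⟩
          rw [hzero, map_zero, sub_zero]
          exact Submodule.zero_mem _
      · have hzero : (if bidx h s c = bidx h q ⟨b.val + r, hbrl⟩ ∧ p = q
              ∧ a.val = b.val + (r + 1) then (1 : ℂ) else 0) = 0 := by
          rw [if_neg]
          rintro ⟨hk, hpq, ha⟩
          obtain ⟨h1, h2⟩ := (bidx_inj h).mp hk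
          have hc2 := congrArg Fin.val h2
          simp at hc2; omega
        rw [hzero, map_zero, sub_zero]
        have hIH := (IH s q c b (by omega)).1
        rw [if_neg (by rintro ⟨_, h2⟩; omega), map_zero, sub_zero] at hIH
        exact Ichi_mul_mem h _ hIH
    have hB : ∀ k : Fin n, Uf (bidx h p a) k * fU r k (bidx h q b) ∈ Ichi n l h := by
      intro k
      obtain ⟨s, c, rfl⟩ := bidx_surj h hl k
      by_cases hca : c.val < a.val
      · have hcomm := (adj_all n r (bidx h p a) (bidx h s c) (bidx h s c) (bidx h q b)).2.2.2
        rw [kd_self, mul_one, kd_ne hne, zero_smul, add_zero] at hcomm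
        rw [eq_sub_of_add_eq hcomm]
        exact Submodule.sub_mem _ (Submodule.smul_of_tower_mem _ _ hIHe) (mul_gen_f h _ hca)
      · have hIH := (IH s q c b (by omega)).2
        exact Ichi_mul_mem h _ hIH
    have hC : ∀ k : Fin n, Ue (bidx h p a) k * fU r k (bidx h q b) ∈ Ichi n l h := by
      intro k
      obtain ⟨s, c, rfl⟩ := bidx_surj h hl k
      by_cases hca : c.val < a.val
      · have hcomm := (adj_all n r (bidx h p a) (bidx h s c) (bidx h s c) (bidx h q b)).2.1
        rw [kd_self, one_smul, kd_ne hne, zero_smul, sub_zero] at hcomm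
        have heq : Ue (bidx h p a) (bidx h s c) * fU r (bidx h s c) (bidx h q b)
            = (fU r (bidx h s c) (bidx h q b) * Ue (bidx h p a) (bidx h s c)
                - (if a.val = c.val + 1 ∧ p = s then (1 : ℂ) else 0)
                    • fU r (bidx h s c) (bidx h q b))
              + (if a.val = c.val + 1 ∧ p = s then (1 : ℂ) else 0)
                    • fU r (bidx h s c) (bidx h q b)
              + fU r (bidx h p a) (bidx h q b) := by
          rw [eq_add_of_sub_eq hcomm]; abel
        rw [heq]
        refine Submodule.add_mem _ (Submodule.add_mem _ (mul_gen_e h _ hca) ?_) hIHf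
        by_cases hc : a.val = c.val + 1 ∧ p = s
        · rw [if_pos hc, one_smul]
          exact (IH s q c b (by omega)).2
        · rw [if_neg hc, zero_smul]
          exact Submodule.zero_mem _
      · have hIH := (IH s q c b (by omega)).2
        exact Ichi_mul_mem h _ hIH
    have hD : ∀ k : Fin n, Uf (bidx h p a) k * eU r k (bidx h q b) ∈ Ichi n l h := by
      intro k
      obtain ⟨s, c, rfl⟩ := bidx_surj h hl k
      by_cases hca : c.val < a.val
      · have hcomm := (adj_all n r (bidx h p a) (bidx h s c) (bidx h s c) (bidx h q b)).2.2.1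
        rw [kd_self, mul_one, kd_ne hne, zero_smul, sub_zero] at hcomm
        rw [eq_add_of_sub_eq hcomm]
        exact Submodule.add_mem _ (Submodule.smul_of_tower_mem _ _ hIHf) (mul_gen_f h _ hca)
      · have hIH := (IH s q c b (by omega)).1
        rw [if_neg (by rintro ⟨_, h2⟩; omega), map_zero, sub_zero] at hIH
        exact Ichi_mul_mem h _ hIH
    have hsum_σ : (∑ k : Fin n,
          (if k = bidx h q ⟨b.val + r, hbrl⟩ ∧ p = q ∧ a.val = b.val + (r + 1)
            then (1 : ℂ) else 0))
        = (if p = q ∧ a.val = b.val + (r + 1) then (1 : ℂ) else 0) := by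
      by_cases hc : p = q ∧ a.val = b.val + (r + 1)
      · simp [hc]
      · simp [hc]
    constructor
    · have hrw : eU (r + 1) (bidx h p a) (bidx h q b)
          - algebraMap ℂ (UQ n) (if p = q ∧ a.val = b.val + (r + 1) then 1 else 0)
          = (∑ k : Fin n, (Ue (bidx h p a) k * eU r k (bidx h q b)
              - algebraMap ℂ (UQ n)
                  (if k = bidx h q ⟨b.val + r, hbrl⟩ ∧ p = q ∧ a.val = b.val + (r + 1)
                    then 1 else 0)))
            + (-1 : ℂ) ^ r • ∑ k : Fin n, Uf (bidx h p a) k * fU r k (bidx h q b) := by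
        rw [eU_succ, Finset.sum_sub_distrib, ← map_sum, hsum_σ]
        abel
      rw [hrw]
      exact Submodule.add_mem _ (Submodule.sum_mem _ fun k _ => hA k)
        (Submodule.smul_of_tower_mem _ _ (Submodule.sum_mem _ fun k _ => hB k))
    · rw [fU_succ]
      exact Submodule.add_mem _ (Submodule.sum_mem _ fun k _ => hC k)
        (Submodule.smul_of_tower_mem _ _ (Submodule.sum_mem _ fun k _ => hD k))
/-- Let `l ∣ n`, `1 ≤ p,q ≤ n/l` and `1 ≤ r ≤ l-1`.  Then in
`U(Q(n))/I_χ`:  `π(e^{(r)}_{l(p-1)+m, l(q-1)+1}) = δ_{pq}` if `m = r+1`,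
`π(e^{(r)}_{l(p-1)+m, l(q-1)+1}) = 0` if `r+2 ≤ m ≤ l`, and
`π(f^{(r)}_{l(p-1)+m, l(q-1)+1}) = 0` if `r+1 ≤ m ≤ l`. -/
theorem statement4 (n l : ℕ) (hl : 0 < l) (h : l ∣ n) (p q : Fin (n / l))
    (r : ℕ) (hr1 : 1 ≤ r) (hr2 : r ≤ l - 1) :
    (piq n l h (eU r (bidx h p ⟨r, by omega⟩) (bidx h q ⟨0, hl⟩)) =
      piq n l h (algebraMap ℂ (UQ n) (kd p q))) ∧
    (∀ (m : ℕ) (_ : r + 2 ≤ m) (_ : m ≤ l),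
      piq n l h (eU r (bidx h p ⟨m - 1, by omega⟩) (bidx h q ⟨0, hl⟩)) = 0) ∧
    (∀ (m : ℕ) (_ : r + 1 ≤ m) (_ : m ≤ l),
      piq n l h (fU r (bidx h p ⟨m - 1, by omega⟩) (bidx h q ⟨0, hl⟩)) = 0) := by
  have hlr : r < l := by omega
  refine ⟨?_, ?_, ?_⟩
  · have H := (main_claim n l hl h r p q ⟨r, by omega⟩ ⟨0, hl⟩ (by simp)).1
    have hs : (if p = q ∧ ((⟨r, by omega⟩ : Fin l)).val = ((⟨0, hl⟩ : Fin l)).val + r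
        then (1 : ℂ) else 0) = kd p q := by
      simp [kd]
    rw [hs] at H
    exact (Submodule.Quotient.eq _).mpr (by simpa using H)
  · intro m hm1 hm2
    have H := (main_claim n l hl h r p q ⟨m - 1, by omega⟩ ⟨0, hl⟩ (by simp; omega)).1
    rw [if_neg (by rintro ⟨_, h2⟩; simp at h2; omega), map_zero, sub_zero] at H
    exact (Submodule.Quotient.mk_eq_zero _).mpr (by simpa using H)
  · intro m hm1 hm2
    have H := (main_claim n l hl h r p q ⟨m - 1, by omega⟩ ⟨0, hl⟩ (by simp; omega)).2
    exact (Submodule.Quotient.mk_eq_zero _).mpr (by simpa using H)
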